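/- A finite-dimensional real normed space X is semitransitive (for all unit vectors x, y there is a contractive automorphism T with T x = y) if and only if every point of the unit sphere admits both an inner ellipsoid and an outer ellipsoid. -/

import Mathlib

open scoped InnerProductSpace Matrix

/-- `x` admits an inner ellipsoid. -/
def InnerEllipsoidAt (X : Type*) [NormedAddCommGroup X] [NormedSpace ℝ X] (x : X) : Prop :=
  ∃ B : LinearMap.BilinForm ℝ X, (∀ z w : X, B z w = B w z) ∧
    (∀ z : X, ‖z‖ ^ 2 ≤ B z z) ∧ B x x = 1

/-- `x` admits an outer ellipsoid. -/
def OuterEllipsoidAt (X : Type*) [NormedAddCommGroup X] [NormedSpace ℝ X] (x : X) : Prop :=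
  ∃ B : LinearMap.BilinForm ℝ X, (∀ z w : X, B z w = B w z) ∧
    (∀ z : X, z ≠ 0 → 0 < B z z) ∧ (∀ z : X, B z z ≤ ‖z‖ ^ 2) ∧ B x x = 1

noncomputable section StmtAux

open scoped MatrixOrder

/-- Any symmetric positive definite bilinear form on a Euclidean space factors through a
linear automorphism as the standard inner product. -/
lemma exists_factor {n : ℕ} (C : LinearMap.BilinForm ℝ (EuclideanSpace ℝ (Fin n)))
    (hs : ∀ z w, C z w = C w z) (hp : ∀ z, z ≠ 0 → 0 < C z z) :
    ∃ σ : EuclideanSpace ℝ (Fin n) ≃ₗ[ℝ] EuclideanSpace ℝ (Fin n),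
      ∀ v w, C v w = ⟪σ v, σ w⟫_ℝ := by
  classical
  set ε : EuclideanSpace ℝ (Fin n) ≃ₗ[ℝ] (Fin n → ℝ) := WithLp.linearEquiv 2 ℝ (Fin n → ℝ) with hε
  set C' : (Fin n → ℝ) →ₗ[ℝ] (Fin n → ℝ) →ₗ[ℝ] ℝ :=
    C.compl₁₂ ε.symm.toLinearMap ε.symm.toLinearMap with hC'
  have hC'app : ∀ a b, C' a b = C (ε.symm a) (ε.symm b) := fun a b => rfl
  set M : Matrix (Fin n) (Fin n) ℝ := LinearMap.toMatrix₂' ℝ C' with hM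
  have hMapp : ∀ a b : Fin n → ℝ, dotProduct a (M *ᵥ b) = C' a b := by
    intro a b
    rw [← Matrix.toLinearMap₂'_apply', hM, Matrix.toLinearMap₂'_toMatrix']
  have hsymm : M.IsHermitian := by
    ext i j
    simp only [Matrix.conjTranspose_apply, star_trivial, hM, LinearMap.toMatrix₂'_apply]
    exact hs _ _
  have hpd : M.PosDef := by
    refine Matrix.PosDef.of_dotProduct_mulVec_pos hsymm fun v hv => ?_
    rw [star_trivial, hMapp, hC'app]
    exact hp _ (by simpa using hv)
  set S : Matrix (Fin n) (Fin n) ℝ := CFC.sqrt M with hS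
  have hSS : S * S = M := CFC.sqrt_mul_sqrt_self M hpd.posSemidef.nonneg
  have hSherm : S.IsHermitian := (Matrix.nonneg_iff_posSemidef.mp (CFC.sqrt_nonneg M)).1
  have hdet : S.det * S.det = M.det := by rw [← Matrix.det_mul, hSS]
  have hdetS : IsUnit S.det := by
    have hMdet := hpd.det_pos
    refine isUnit_iff_ne_zero.2 fun h0 => ?_
    rw [h0, mul_zero] at hdet
    exact absurd hdet.symm hMdet.ne'
  have hinv : Invertible S := S.invertibleOfIsUnitDet hdetS
  set σ₀ : (Fin n → ℝ) ≃ₗ[ℝ] (Fin n → ℝ) := S.toLinearEquiv' hinv with hσ₀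
  have hσ₀app : ∀ a : Fin n → ℝ, σ₀ a = S *ᵥ a := fun a => rfl
  refine ⟨(ε.trans σ₀).trans ε.symm, fun v w => ?_⟩
  have hST : Sᵀ = S := by
    have := hSherm.eq
    rwa [Matrix.conjTranspose_eq_transpose_of_trivial] at this
  have hMT : Mᵀ = M := by
    have := hsymm.eq
    rwa [Matrix.conjTranspose_eq_transpose_of_trivial] at this
  have key : ∀ a b : Fin n → ℝ,
      dotProduct (S *ᵥ a) (S *ᵥ b) = dotProduct a (M *ᵥ b) := by
    intro a b
    rw [Matrix.dotProduct_mulVec (S *ᵥ a) S b, ← Matrix.mulVec_transpose, hST,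
      Matrix.mulVec_mulVec, hSS, ← hMT, Matrix.mulVec_transpose,
      ← Matrix.dotProduct_mulVec, hMT]
  have hCvw : C v w = dotProduct (S *ᵥ ε v) (S *ᵥ ε w) := by
    rw [key, hMapp, hC'app]
    simp
  rw [hCvw]
  rw [PiLp.inner_apply]
  simp only [RCLike.inner_apply, conj_trivial]
  rw [dotProduct_comm]
  rfl

/-- Unit sphere transitivity of the orthogonal group of a Euclidean space. -/
lemma exists_isometry {n : ℕ} (u v : EuclideanSpace ℝ (Fin n)) (h : ‖u‖ = ‖v‖) :
    ∃ R : EuclideanSpace ℝ (Fin n) ≃ₗᵢ[ℝ] EuclideanSpace ℝ (Fin n), R u = v :=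
  ⟨Submodule.reflection (ℝ ∙ (u - v))ᗮ, Submodule.reflection_sub h⟩

/-- Given two symmetric positive definite bilinear forms and unit vectors for each, there is a
linear automorphism carrying one form to the other and one unit vector to the other. -/
lemma crux {X : Type*} [NormedAddCommGroup X] [NormedSpace ℝ X] [FiniteDimensional ℝ X]
    (B₁ B₂ : LinearMap.BilinForm ℝ X)
    (hs₁ : ∀ z w, B₁ z w = B₁ w z) (hp₁ : ∀ z, z ≠ 0 → 0 < B₁ z z)
    (hs₂ : ∀ z w, B₂ z w = B₂ w z) (hp₂ : ∀ z, z ≠ 0 → 0 < B₂ z z)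
    {x y : X} (hx : B₁ x x = 1) (hy : B₂ y y = 1) :
    ∃ T : X ≃ₗ[ℝ] X, T x = y ∧ ∀ w, B₂ (T w) (T w) = B₁ w w := by
  classical
  set φ : X ≃ₗ[ℝ] EuclideanSpace ℝ (Fin (Module.finrank ℝ X)) :=
    (toEuclidean (E := X)).toLinearEquiv with hφ
  set C₁ := B₁.compl₁₂ φ.symm.toLinearMap φ.symm.toLinearMap with hC₁
  set C₂ := B₂.compl₁₂ φ.symm.toLinearMap φ.symm.toLinearMap with hC₂
  have hC₁app : ∀ a b, C₁ a b = B₁ (φ.symm a) (φ.symm b) := fun a b => rfl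
  have hC₂app : ∀ a b, C₂ a b = B₂ (φ.symm a) (φ.symm b) := fun a b => rfl
  obtain ⟨σ₁, h₁⟩ := exists_factor C₁ (fun z w => hs₁ _ _)
    (fun z hz => hp₁ _ (by simpa using hz))
  obtain ⟨σ₂, h₂⟩ := exists_factor C₂ (fun z w => hs₂ _ _)
    (fun z hz => hp₂ _ (by simpa using hz))
  have hu : ‖σ₁ (φ x)‖ = 1 := by
    have h1 : ⟪σ₁ (φ x), σ₁ (φ x)⟫_ℝ = 1 := by
      rw [← h₁, hC₁app]; simpa using hx
    have h2 : ‖σ₁ (φ x)‖ ^ 2 = 1 := by rw [← real_inner_self_eq_norm_sq]; exact h1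
    rw [← Real.sqrt_sq (norm_nonneg _), h2, Real.sqrt_one]
  have hv : ‖σ₂ (φ y)‖ = 1 := by
    have h1 : ⟪σ₂ (φ y), σ₂ (φ y)⟫_ℝ = 1 := by
      rw [← h₂, hC₂app]; simpa using hy
    have h2 : ‖σ₂ (φ y)‖ ^ 2 = 1 := by rw [← real_inner_self_eq_norm_sq]; exact h1
    rw [← Real.sqrt_sq (norm_nonneg _), h2, Real.sqrt_one]
  obtain ⟨R, hR⟩ := exists_isometry _ _ (hu.trans hv.symm)
  refine ⟨(((φ.trans σ₁).trans R.toLinearEquiv).trans σ₂.symm).trans φ.symm, ?_, ?_⟩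
  · simp only [LinearEquiv.trans_apply, LinearIsometryEquiv.coe_toLinearEquiv, hR]
    simp
  · intro w
    simp only [LinearEquiv.trans_apply, LinearIsometryEquiv.coe_toLinearEquiv]
    have e1 : ∀ a, B₂ (φ.symm a) (φ.symm a) = C₂ a a := fun a => rfl
    rw [e1, h₂, LinearEquiv.apply_symm_apply, R.inner_map_map, ← h₁, hC₁app]
    simp

/-- From semitransitivity, every unit vector admits both ellipsoids. -/
lemma forward_dir {X : Type*} [NormedAddCommGroup X] [NormedSpace ℝ X] [FiniteDimensional ℝ X]
    (h : ∀ x y : X, ‖x‖ = 1 → ‖y‖ = 1 →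
        ∃ T : X ≃L[ℝ] X, ‖(T : X →L[ℝ] X)‖ ≤ 1 ∧ T x = y)
    (x : X) (hx : ‖x‖ = 1) : InnerEllipsoidAt X x ∧ OuterEllipsoidAt X x := by
  classical
  set e : X →ₗ[ℝ] EuclideanSpace ℝ (Fin (Module.finrank ℝ X)) :=
    (toEuclidean (E := X)).toLinearEquiv.toLinearMap with he
  have einj : Function.Injective e := (toEuclidean (E := X)).toLinearEquiv.injective
  set B₀ : LinearMap.BilinForm ℝ X :=
    (innerₗ (EuclideanSpace ℝ (Fin (Module.finrank ℝ X)))).compl₁₂ e e with hB₀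
  have hB₀app : ∀ z w, B₀ z w = ⟪e z, e w⟫_ℝ := fun z w => rfl
  have hB₀diag : ∀ z, B₀ z z = ‖e z‖ ^ 2 := fun z => by
    rw [hB₀app, real_inner_self_eq_norm_sq]
  have hB₀symm : ∀ z w, B₀ z w = B₀ w z := fun z w => by
    rw [hB₀app, hB₀app, real_inner_comm]
  have hB₀pos : ∀ z, z ≠ 0 → 0 < B₀ z z := by
    intro z hz
    rw [hB₀diag]
    have h0 : e z ≠ 0 := fun h0 => hz (einj (by simpa using h0))
    exact pow_pos (norm_pos_iff.2 h0) 2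
  have hcont : Continuous fun z : X => B₀ z z := by
    have : (fun z : X => B₀ z z) = fun z : X => ‖e z‖ ^ 2 := funext hB₀diag
    rw [this]
    exact ((toEuclidean (E := X)).continuous.norm.pow 2)
  have hsx : x ∈ Metric.sphere (0 : X) 1 := by simpa using hx
  have hne : (Metric.sphere (0 : X) 1).Nonempty := ⟨x, hsx⟩
  obtain ⟨z₀, hz₀mem, hz₀max⟩ :=
    (isCompact_sphere (0 : X) 1).exists_isMaxOn hne hcont.continuousOn
  obtain ⟨z₁, hz₁mem, hz₁min⟩ :=
    (isCompact_sphere (0 : X) 1).exists_isMinOn hne hcont.continuousOn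
  have hz₀norm : ‖z₀‖ = 1 := by simpa using hz₀mem
  have hz₁norm : ‖z₁‖ = 1 := by simpa using hz₁mem
  have hz₀ne : z₀ ≠ 0 := fun h0 => by simp [h0] at hz₀norm
  have hz₁ne : z₁ ≠ 0 := fun h0 => by simp [h0] at hz₁norm
  set c := B₀ z₀ z₀ with hc
  set m := B₀ z₁ z₁ with hm
  have hcpos : 0 < c := hB₀pos _ hz₀ne
  have hmpos : 0 < m := hB₀pos _ hz₁ne
  have key_scale : ∀ w : X, w ≠ 0 → ∀ t : ℝ, ‖w‖ = t → B₀ ((t⁻¹) • w) ((t⁻¹) • w)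
      = t⁻¹ * (t⁻¹ * B₀ w w) := by
    intro w hw t ht
    simp [map_smul, smul_eq_mul]
  have houter : ∀ w : X, c⁻¹ * B₀ w w ≤ ‖w‖ ^ 2 := by
    intro w
    by_cases hw : w = 0
    · simp [hw]
    · have hr : 0 < ‖w‖ := norm_pos_iff.2 hw
      have hmem : (‖w‖⁻¹ • w) ∈ Metric.sphere (0 : X) 1 := by
        simp [norm_smul, abs_of_pos (inv_pos.2 hr), inv_mul_cancel₀ hr.ne']
      have hle : B₀ (‖w‖⁻¹ • w) (‖w‖⁻¹ • w) ≤ c := hz₀max hmem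
      rw [key_scale w hw ‖w‖ rfl] at hle
      have h2 : B₀ w w ≤ c * ‖w‖ ^ 2 := by
        have h3 := mul_le_mul_of_nonneg_left hle (le_of_lt (mul_pos hr hr))
        calc B₀ w w = (‖w‖ * ‖w‖) * (‖w‖⁻¹ * (‖w‖⁻¹ * B₀ w w)) := by
              field_simp
            _ ≤ (‖w‖ * ‖w‖) * c := h3
            _ = c * ‖w‖ ^ 2 := by ring
      calc c⁻¹ * B₀ w w ≤ c⁻¹ * (c * ‖w‖ ^ 2) :=
            mul_le_mul_of_nonneg_left h2 (le_of_lt (inv_pos.2 hcpos))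
        _ = ‖w‖ ^ 2 := by field_simp
  have hinner : ∀ w : X, ‖w‖ ^ 2 ≤ m⁻¹ * B₀ w w := by
    intro w
    by_cases hw : w = 0
    · simp [hw]
    · have hr : 0 < ‖w‖ := norm_pos_iff.2 hw
      have hmem : (‖w‖⁻¹ • w) ∈ Metric.sphere (0 : X) 1 := by
        simp [norm_smul, abs_of_pos (inv_pos.2 hr), inv_mul_cancel₀ hr.ne']
      have hle : m ≤ B₀ (‖w‖⁻¹ • w) (‖w‖⁻¹ • w) := hz₁min hmem
      rw [key_scale w hw ‖w‖ rfl] at hle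
      have h2 : m * ‖w‖ ^ 2 ≤ B₀ w w := by
        have h3 := mul_le_mul_of_nonneg_left hle (le_of_lt (mul_pos hr hr))
        calc m * ‖w‖ ^ 2 = (‖w‖ * ‖w‖) * m := by ring
          _ ≤ (‖w‖ * ‖w‖) * (‖w‖⁻¹ * (‖w‖⁻¹ * B₀ w w)) := h3
          _ = B₀ w w := by field_simp
      calc ‖w‖ ^ 2 = m⁻¹ * (m * ‖w‖ ^ 2) := by field_simp
        _ ≤ m⁻¹ * B₀ w w :=
            mul_le_mul_of_nonneg_left h2 (le_of_lt (inv_pos.2 hmpos))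
  constructor
  · -- inner ellipsoid at x, transported from z₁
    obtain ⟨T, hT1, hT2⟩ := h z₁ x hz₁norm hx
    have hTle : ∀ z : X, ‖(T : X →L[ℝ] X) z‖ ≤ ‖z‖ := fun z =>
      ((T : X →L[ℝ] X).le_opNorm z).trans
        (by calc ‖(T : X →L[ℝ] X)‖ * ‖z‖ ≤ 1 * ‖z‖ :=
                mul_le_mul_of_nonneg_right hT1 (norm_nonneg z)
              _ = ‖z‖ := one_mul _)
    set L : X →ₗ[ℝ] X := (T.symm : X →L[ℝ] X).toLinearMap with hL
    refine ⟨(m⁻¹ • B₀).compl₁₂ L L, ?_, ?_, ?_⟩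
    · intro z w
      simp only [LinearMap.compl₁₂_apply, LinearMap.smul_apply, smul_eq_mul]
      rw [hB₀symm]
    · intro z
      have h1 : ‖z‖ ≤ ‖T.symm z‖ := by
        have := hTle (T.symm z)
        simpa using this
      have h2 : ‖z‖ ^ 2 ≤ ‖T.symm z‖ ^ 2 := pow_le_pow_left₀ (norm_nonneg _) h1 2
      have h3 := hinner (T.symm z)
      simp only [LinearMap.compl₁₂_apply, LinearMap.smul_apply, smul_eq_mul, hL,
        ContinuousLinearMap.coe_coe, ContinuousLinearEquiv.coe_coe]
      calc ‖z‖ ^ 2 ≤ ‖T.symm z‖ ^ 2 := h2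
        _ ≤ m⁻¹ * B₀ (T.symm z) (T.symm z) := h3
        _ = m⁻¹ * B₀ ((T.symm : X →L[ℝ] X) z) ((T.symm : X →L[ℝ] X) z) := rfl
    · have hxz : T.symm x = z₁ := by rw [← hT2]; exact T.symm_apply_apply z₁
      simp only [LinearMap.compl₁₂_apply, LinearMap.smul_apply, smul_eq_mul, hL,
        ContinuousLinearMap.coe_coe, ContinuousLinearEquiv.coe_coe]
      rw [hxz, ← hm]
      field_simp
  · -- outer ellipsoid at x, transported from z₀
    obtain ⟨T, hT1, hT2⟩ := h x z₀ hx hz₀norm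
    have hTle : ∀ z : X, ‖(T : X →L[ℝ] X) z‖ ≤ ‖z‖ := fun z =>
      ((T : X →L[ℝ] X).le_opNorm z).trans
        (by calc ‖(T : X →L[ℝ] X)‖ * ‖z‖ ≤ 1 * ‖z‖ :=
                mul_le_mul_of_nonneg_right hT1 (norm_nonneg z)
              _ = ‖z‖ := one_mul _)
    set L : X →ₗ[ℝ] X := (T : X →L[ℝ] X).toLinearMap with hL
    refine ⟨(c⁻¹ • B₀).compl₁₂ L L, ?_, ?_, ?_, ?_⟩
    · intro z w
      simp only [LinearMap.compl₁₂_apply, LinearMap.smul_apply, smul_eq_mul]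
      rw [hB₀symm]
    · intro z hz
      have hTz : (T : X →L[ℝ] X) z ≠ 0 := by
        intro h0
        exact hz (by simpa using congrArg T.symm (h0 : T z = 0))
      simp only [LinearMap.compl₁₂_apply, LinearMap.smul_apply, smul_eq_mul, hL,
        ContinuousLinearMap.coe_coe, ContinuousLinearEquiv.coe_coe]
      exact mul_pos (inv_pos.2 hcpos) (hB₀pos _ (by simpa using hTz))
    · intro z
      have h1 : ‖(T : X →L[ℝ] X) z‖ ≤ ‖z‖ := hTle z
      have h2 : ‖(T : X →L[ℝ] X) z‖ ^ 2 ≤ ‖z‖ ^ 2 := pow_le_pow_left₀ (norm_nonneg _) h1 2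
      simp only [LinearMap.compl₁₂_apply, LinearMap.smul_apply, smul_eq_mul, hL,
        ContinuousLinearMap.coe_coe, ContinuousLinearEquiv.coe_coe]
      exact (houter _).trans (by simpa using h2)
    · simp only [LinearMap.compl₁₂_apply, LinearMap.smul_apply, smul_eq_mul, hL,
        ContinuousLinearMap.coe_coe, ContinuousLinearEquiv.coe_coe]
      rw [hT2, ← hc]
      field_simp

end StmtAux

/-- A finite-dimensional real normed space is semitransitive iff every point of the unit
sphere admits both an inner and an outer ellipsoid. -/
theorem stmt7 (X : Type*) [NormedAddCommGroup X] [NormedSpace ℝ X] [FiniteDimensional ℝ X] :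
    (∀ x y : X, ‖x‖ = 1 → ‖y‖ = 1 →
        ∃ T : X ≃L[ℝ] X, ‖(T : X →L[ℝ] X)‖ ≤ 1 ∧ T x = y) ↔
      (∀ x : X, ‖x‖ = 1 → InnerEllipsoidAt X x ∧ OuterEllipsoidAt X x) := by
  constructor
  · exact fun h x hx => forward_dir h x hx
  · intro hEll x y hx hy
    have hInner : InnerEllipsoidAt X y := (hEll y hy).1
    have hOuter : OuterEllipsoidAt X x := (hEll x hx).2
    obtain ⟨By, hys, hyb, hy1⟩ := hInner
    obtain ⟨Bx, hxs, hxp, hxb, hx1⟩ := hOuter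
    have hyp : ∀ z : X, z ≠ 0 → 0 < By z z := fun z hz =>
      lt_of_lt_of_le (pow_pos (norm_pos_iff.2 hz) 2) (hyb z)
    obtain ⟨T, hTx, hT⟩ := crux Bx By hxs hxp hys hyp hx1 hy1
    have hle : ∀ w : X, ‖T w‖ ≤ ‖w‖ := by
      intro w
      have h1 : ‖T w‖ ^ 2 ≤ ‖w‖ ^ 2 := by
        calc ‖T w‖ ^ 2 ≤ By (T w) (T w) := hyb _
          _ = Bx w w := hT w
          _ ≤ ‖w‖ ^ 2 := hxb w
      exact (pow_le_pow_iff_left₀ (norm_nonneg _) (norm_nonneg _) two_ne_zero).1 h1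
    refine ⟨T.toContinuousLinearEquiv, ?_, ?_⟩
    · refine ContinuousLinearMap.opNorm_le_bound _ zero_le_one fun w => ?_
      rw [one_mul]
      simpa using hle w
    · simpa using hTx
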